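/- arXiv:2501.15846 — 2 statements merged into one kernel-verified Lean document; each statement's English description precedes it below -/
import Mathlib

section
/- If the polarization vector f^μ is parallel transported along the null geodesic p^μ (p^α ∇_α f^μ = 0) and satisfies p_μ f^μ = 0, then the transverse polarization vector ε^μ := S^μ_ν f^ν satisfies p^α ∇_α ε^μ = (p^μ/p) ε_β p^α ∇_α u^β, and consequently its transverse directional derivative along p vanishes: S^μ_ν p^α ∇_α ε^ν = 0. -/
set_option maxHeartbeats 1600000


/-- Points of the coordinate chart of a 4-dimensional spacetime. -/
abbrev Pt := Fin 4 → ℝ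

/-- Coordinate partial derivative ∂_ν f of a real scalar field. -/
noncomputable def pd (f : Pt → ℝ) (ν : Fin 4) (x : Pt) : ℝ :=
  fderiv ℝ f x (Pi.single ν 1)

/-- Coordinate partial derivative of a complex scalar field. -/
noncomputable def pdC (f : Pt → ℂ) (ν : Fin 4) (x : Pt) : ℂ :=
  fderiv ℝ f x (Pi.single ν 1)

/-- Covariant derivative ∇_ν V^μ = ∂_ν V^μ + Γ^μ_{νλ} V^λ (real fields). -/
noncomputable def covD (Γ : Pt → Fin 4 → Fin 4 → Fin 4 → ℝ) (V : Pt → Fin 4 → ℝ)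
    (μ ν : Fin 4) (x : Pt) : ℝ :=
  pd (fun y => V y μ) ν x + ∑ lam, Γ x μ ν lam * V x lam

/-- Directional covariant derivative (real fields). -/
noncomputable def dirD (Γ : Pt → Fin 4 → Fin 4 → Fin 4 → ℝ) (U V : Pt → Fin 4 → ℝ)
    (μ : Fin 4) (x : Pt) : ℝ :=
  ∑ ν, U x ν * covD Γ V μ ν x

/-- Covariant derivative of a complex vector field. -/
noncomputable def covDC (Γ : Pt → Fin 4 → Fin 4 → Fin 4 → ℝ) (V : Pt → Fin 4 → ℂ)
    (μ ν : Fin 4) (x : Pt) : ℂ :=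
  pdC (fun y => V y μ) ν x + ∑ lam, (Γ x μ ν lam : ℂ) * V x lam

/-- Directional covariant derivative of a complex vector field. -/
noncomputable def dirDC (Γ : Pt → Fin 4 → Fin 4 → Fin 4 → ℝ) (U : Pt → Fin 4 → ℝ)
    (V : Pt → Fin 4 → ℂ) (μ : Fin 4) (x : Pt) : ℂ :=
  ∑ ν, (U x ν : ℂ) * covDC Γ V μ ν x

/-- Photon energy in the rest frame: p := −u_μ p^μ. -/
noncomputable def pscal (g : Pt → Matrix (Fin 4) (Fin 4) ℝ) (u P : Pt → Fin 4 → ℝ)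
    (x : Pt) : ℝ :=
  -(∑ μ, ∑ ν, g x μ ν * u x μ * P x ν)

/-- The lowered field v_ν = g_{να} v^α. -/
noncomputable def lowerField (g : Pt → Matrix (Fin 4) (Fin 4) ℝ) (v : Pt → Fin 4 → ℝ)
    (x : Pt) (ν : Fin 4) : ℝ :=
  ∑ α, g x ν α * v x α

/-- The spatial propagation direction p̂^μ := p^μ/p − u^μ. -/
noncomputable def phatF (g : Pt → Matrix (Fin 4) (Fin 4) ℝ) (u P : Pt → Fin 4 → ℝ)
    (x : Pt) (μ : Fin 4) : ℝ :=
  P x μ / pscal g u P x - u x μ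

/-- The screen projector field S^μ_ν = δ^μ_ν + u^μ u_ν − p̂^μ p̂_ν. -/
noncomputable def SmixF (g : Pt → Matrix (Fin 4) (Fin 4) ℝ) (u P : Pt → Fin 4 → ℝ)
    (x : Pt) (μ ν : Fin 4) : ℝ :=
  (if μ = ν then (1 : ℝ) else 0) + u x μ * lowerField g u x ν
    - phatF g u P x μ * lowerField g (phatF g u P) x ν

/-- The transverse polarization vector ε^μ := S^μ_ν f^ν. -/
noncomputable def epsF (g : Pt → Matrix (Fin 4) (Fin 4) ℝ) (u P : Pt → Fin 4 → ℝ)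
    (f : Pt → Fin 4 → ℂ) (x : Pt) (μ : Fin 4) : ℂ :=
  ∑ ν, (SmixF g u P x μ ν : ℂ) * f x ν

/-! ### Auxiliary calculus lemmas -/

lemma pd_mul {f g : Pt → ℝ} {x : Pt} (hf : DifferentiableAt ℝ f x)
    (hg : DifferentiableAt ℝ g x) (ν : Fin 4) :
    pd (fun y => f y * g y) ν x = pd f ν x * g x + f x * pd g ν x := by
  simp [pd, fderiv_fun_mul hf hg]; ring

lemma pd_sum {n : ℕ} {F : Fin n → Pt → ℝ} {x : Pt}
    (hF : ∀ i, DifferentiableAt ℝ (F i) x) (ν : Fin 4) :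
    pd (fun y => ∑ i, F i y) ν x = ∑ i, pd (F i) ν x := by
  simp [pd, fderiv_fun_sum (fun i _ => hF i)]

lemma pdC_add {f g : Pt → ℂ} {x : Pt} (hf : DifferentiableAt ℝ f x)
    (hg : DifferentiableAt ℝ g x) (ν : Fin 4) :
    pdC (fun y => f y + g y) ν x = pdC f ν x + pdC g ν x := by
  simp [pdC, fderiv_fun_add hf hg]

lemma pdC_mul {f g : Pt → ℂ} {x : Pt} (hf : DifferentiableAt ℝ f x)
    (hg : DifferentiableAt ℝ g x) (ν : Fin 4) :
    pdC (fun y => f y * g y) ν x = pdC f ν x * g x + f x * pdC g ν x := by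
  simp [pdC, fderiv_fun_mul hf hg]; ring

lemma pdC_sum {n : ℕ} {F : Fin n → Pt → ℂ} {x : Pt}
    (hF : ∀ i, DifferentiableAt ℝ (F i) x) (ν : Fin 4) :
    pdC (fun y => ∑ i, F i y) ν x = ∑ i, pdC (F i) ν x := by
  simp [pdC, fderiv_fun_sum (fun i _ => hF i)]

lemma pdC_ofReal {f : Pt → ℝ} {x : Pt} (hf : DifferentiableAt ℝ f x) (ν : Fin 4) :
    pdC (fun y => (f y : ℂ)) ν x = (pd f ν x : ℂ) := by
  have h := (Complex.ofRealCLM.hasFDerivAt.comp x hf.hasFDerivAt).fderiv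
  simp only [pdC, pd]
  rw [show (fun y => ((f y : ℝ) : ℂ)) = Complex.ofRealCLM ∘ f from rfl, h]
  simp

/-- Leibniz/compatibility rule for derivative of a full metric contraction. -/
lemma contract_deriv (g : Pt → Matrix (Fin 4) (Fin 4) ℝ) (Γ : Pt → Fin 4 → Fin 4 → Fin 4 → ℝ)
    (Pf v w : Pt → Fin 4 → ℝ)
    (hCompat : ∀ x lam μ ν, pd (fun y => g y μ ν) lam x =
      (∑ α, Γ x α lam μ * g x α ν) + ∑ α, Γ x α lam ν * g x μ α)
    (hgD : ∀ μ ν, Differentiable ℝ fun y => g y μ ν)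
    (hvD : ∀ μ, Differentiable ℝ fun y => v y μ)
    (hwD : ∀ μ, Differentiable ℝ fun y => w y μ) (x : Pt) :
    ∑ ν, Pf x ν * pd (fun y => ∑ μ, ∑ lam, g y μ lam * v y μ * w y lam) ν x
    = (∑ β, (∑ α, g x β α * w x α) * dirD Γ Pf v β x)
      + (∑ β, (∑ α, g x α β * v x α) * dirD Γ Pf w β x) := by
  have hpd : ∀ ν, pd (fun y => ∑ μ, ∑ lam, g y μ lam * v y μ * w y lam) ν x
      = ∑ μ, ∑ lam, (pd (fun y => g y μ lam) ν x * v x μ * w x lam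
          + g x μ lam * pd (fun y => v y μ) ν x * w x lam
          + g x μ lam * v x μ * pd (fun y => w y lam) ν x) := by
    intro ν
    rw [pd_sum (F := fun μ y => ∑ lam, g y μ lam * v y μ * w y lam)
      (fun μ => DifferentiableAt.fun_sum fun lam _ =>
        (((hgD μ lam x).mul (hvD μ x)).mul (hwD lam x))) ν]
    refine Finset.sum_congr rfl fun μ _ => ?_
    rw [pd_sum (F := fun lam y => g y μ lam * v y μ * w y lam)
      (fun lam => ((hgD μ lam x).mul (hvD μ x)).mul (hwD lam x)) ν]
    refine Finset.sum_congr rfl fun lam _ => ?_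
    rw [pd_mul ((hgD μ lam x).fun_mul (hvD μ x)) (hwD lam x) ν,
      pd_mul (hgD μ lam x) (hvD μ x) ν]
    ring
  simp only [hpd, hCompat, dirD, covD]
  simp only [Fin.sum_univ_four]
  ring

/-- Complex version: derivative of u_λ f^λ. -/
lemma contract_derivC (g : Pt → Matrix (Fin 4) (Fin 4) ℝ) (Γ : Pt → Fin 4 → Fin 4 → Fin 4 → ℝ)
    (Pf u : Pt → Fin 4 → ℝ) (f : Pt → Fin 4 → ℂ)
    (hCompat : ∀ x lam μ ν, pd (fun y => g y μ ν) lam x =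
      (∑ α, Γ x α lam μ * g x α ν) + ∑ α, Γ x α lam ν * g x μ α)
    (hgD : ∀ μ ν, Differentiable ℝ fun y => g y μ ν)
    (huD : ∀ μ, Differentiable ℝ fun y => u y μ)
    (hfD : ∀ μ, Differentiable ℝ fun y => f y μ) (x : Pt) :
    ∑ ν, (Pf x ν : ℂ) * pdC (fun y => ∑ lam, ((lowerField g u y lam : ℝ) : ℂ) * f y lam) ν x
    = (∑ lam, ((lowerField g u x lam : ℝ) : ℂ) * dirDC Γ Pf f lam x)
      + ∑ β, ((dirD Γ Pf u β x : ℝ) : ℂ) * (∑ lam, ((g x lam β : ℝ) : ℂ) * f x lam) := by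
  have hlowD : ∀ lam, DifferentiableAt ℝ (fun y => lowerField g u y lam) x := by
    intro lam
    exact DifferentiableAt.fun_sum fun α _ => ((hgD lam α x).mul (huD α x))
  have hpdlow : ∀ lam ν, pd (fun y => lowerField g u y lam) ν x
      = ∑ α, (pd (fun y => g y lam α) ν x * u x α + g x lam α * pd (fun y => u y α) ν x) := by
    intro lam ν
    rw [show (fun y => lowerField g u y lam) = fun y => ∑ α, g y lam α * u y α from rfl,
      pd_sum (F := fun α y => g y lam α * u y α) (fun α => (hgD lam α x).mul (huD α x)) ν]
    exact Finset.sum_congr rfl fun α _ => pd_mul (hgD lam α x) (huD α x) ν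
  have hofD : ∀ lam, DifferentiableAt ℝ (fun y => ((lowerField g u y lam : ℝ) : ℂ)) x := by
    intro lam
    exact Complex.ofRealCLM.differentiableAt.comp x (hlowD lam)
  have hpds : ∀ ν, pdC (fun y => ∑ lam, ((lowerField g u y lam : ℝ) : ℂ) * f y lam) ν x
      = ∑ lam, ((pd (fun y => lowerField g u y lam) ν x : ℝ) : ℂ) * f x lam
          + ∑ lam, ((lowerField g u x lam : ℝ) : ℂ) * pdC (fun y => f y lam) ν x := by
    intro ν
    rw [pdC_sum (F := fun lam y => ((lowerField g u y lam : ℝ) : ℂ) * f y lam)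
      (fun lam => (hofD lam).mul (hfD lam x)) ν]
    rw [← Finset.sum_add_distrib]
    refine Finset.sum_congr rfl fun lam _ => ?_
    rw [pdC_mul (hofD lam) (hfD lam x) ν, pdC_ofReal (hlowD lam) ν]
  simp only [hpds]
  simp only [hpdlow, hCompat]
  simp only [dirDC, covDC, dirD, covD, lowerField]
  push_cast
  simp only [Fin.sum_univ_four]
  ring

lemma Dp_pscal (g : Pt → Matrix (Fin 4) (Fin 4) ℝ) (Γ : Pt → Fin 4 → Fin 4 → Fin 4 → ℝ)
    (u P : Pt → Fin 4 → ℝ)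
    (hCompat : ∀ x lam μ ν, pd (fun y => g y μ ν) lam x =
      (∑ α, Γ x α lam μ * g x α ν) + ∑ α, Γ x α lam ν * g x μ α)
    (hgD : ∀ μ ν, Differentiable ℝ fun y => g y μ ν)
    (huD : ∀ μ, Differentiable ℝ fun y => u y μ)
    (hPD : ∀ μ, Differentiable ℝ fun y => P y μ)
    (hPgeo : ∀ x μ, dirD Γ P P μ x = 0) (x : Pt) :
    ∑ ν, P x ν * pd (pscal g u P) ν x
      = -∑ β, (∑ α, g x β α * P x α) * dirD Γ P u β x := by
  have hnegpd : ∀ ν, pd (pscal g u P) ν x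
      = - pd (fun y => ∑ μ, ∑ lam, g y μ lam * u y μ * P y lam) ν x := by
    intro ν
    rw [show pscal g u P = fun y => -(∑ μ, ∑ lam, g y μ lam * u y μ * P y lam) from rfl]
    simp [pd, fderiv_neg]
  simp only [hnegpd, mul_neg]
  rw [Finset.sum_neg_distrib, neg_inj, contract_deriv g Γ P u P hCompat hgD huD hPD x]
  simp [hPgeo x]

lemma pd_inv_pscal (g : Pt → Matrix (Fin 4) (Fin 4) ℝ) (u P : Pt → Fin 4 → ℝ)
    (hgD : ∀ μ ν, Differentiable ℝ fun y => g y μ ν)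
    (huD : ∀ μ, Differentiable ℝ fun y => u y μ)
    (hPD : ∀ μ, Differentiable ℝ fun y => P y μ)
    (hpos : ∀ x, 0 < pscal g u P x) (ν : Fin 4) (x : Pt) :
    pd (fun y => (pscal g u P y)⁻¹) ν x = - pd (pscal g u P) ν x / (pscal g u P x)^2 := by
  have hpD : Differentiable ℝ (pscal g u P) := by
    apply Differentiable.neg
    apply Differentiable.fun_sum; intro μ _
    apply Differentiable.fun_sum; intro lam _
    exact ((hgD μ lam).mul (huD μ)).mul (hPD lam)
  have hqD : DifferentiableAt ℝ (fun y => (pscal g u P y)⁻¹) x :=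
    (hpD x).inv (hpos x).ne'
  have h1 : (fun y => pscal g u P y * (pscal g u P y)⁻¹) = fun _ => (1:ℝ) :=
    funext fun y => mul_inv_cancel₀ (hpos y).ne'
  have h2 : pd (fun y => pscal g u P y * (pscal g u P y)⁻¹) ν x = 0 := by
    rw [h1]; simp [pd]
  rw [pd_mul (hpD x) hqD ν] at h2
  have ht : pscal g u P x ≠ 0 := (hpos x).ne'
  set A := pd (fun y => (pscal g u P y)⁻¹) ν x with hA
  set B := pd (pscal g u P) ν x with hB
  set t := pscal g u P x with htt
  field_simp at h2 ⊢
  linarith [h2]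

lemma dirD_Pq (Γ : Pt → Fin 4 → Fin 4 → Fin 4 → ℝ) (P : Pt → Fin 4 → ℝ) (q : Pt → ℝ)
    (hPD : ∀ μ, Differentiable ℝ fun y => P y μ) (hqD : Differentiable ℝ q)
    (μ : Fin 4) (x : Pt) :
    dirD Γ P (fun y ν => P y ν * q y) μ x
      = q x * dirD Γ P P μ x + P x μ * ∑ ν, P x ν * pd q ν x := by
  simp only [dirD, covD]
  simp only [pd_mul (hPD μ x) (hqD x)]
  simp only [Fin.sum_univ_four]
  ring

lemma dirDC_split (Γ : Pt → Fin 4 → Fin 4 → Fin 4 → ℝ) (P : Pt → Fin 4 → ℝ) (q : Pt → ℝ)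
    (sF : Pt → ℂ) (f : Pt → Fin 4 → ℂ)
    (hPD : ∀ μ, Differentiable ℝ fun y => P y μ) (hqD : Differentiable ℝ q)
    (hfD : ∀ μ, Differentiable ℝ fun y => f y μ) (hsD : Differentiable ℝ sF)
    (μ : Fin 4) (x : Pt) :
    dirDC Γ P (fun y ν => f y ν + ((P y ν * q y : ℝ) : ℂ) * sF y) μ x
      = dirDC Γ P f μ x
        + ((dirD Γ P (fun y ν => P y ν * q y) μ x : ℝ) : ℂ) * sF x
        + ((P x μ * q x : ℝ) : ℂ) * ∑ ν, (P x ν : ℂ) * pdC sF ν x := by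
  have hPq : DifferentiableAt ℝ (fun y => ((P y μ * q y : ℝ) : ℂ)) x :=
    Complex.ofRealCLM.differentiableAt.comp x ((hPD μ x).mul (hqD x))
  have hpdC : ∀ ν, pdC (fun y => f y μ + ((P y μ * q y : ℝ) : ℂ) * sF y) ν x
      = pdC (fun y => f y μ) ν x
        + ((pd (fun y => P y μ * q y) ν x : ℝ) : ℂ) * sF x
        + ((P x μ * q x : ℝ) : ℂ) * pdC sF ν x := by
    intro ν
    rw [pdC_add (hfD μ x) (hPq.fun_mul (hsD x)) ν, pdC_mul hPq (hsD x) ν,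
      pdC_ofReal ((hPD μ x).fun_mul (hqD x)) ν]
    ring
  simp only [dirDC, covDC, dirD, covD]
  simp only [hpdC]
  push_cast
  simp only [Fin.sum_univ_four]
  ring

lemma eps_formula (g : Pt → Matrix (Fin 4) (Fin 4) ℝ) (u P : Pt → Fin 4 → ℝ)
    (f : Pt → Fin 4 → ℂ) (y : Pt)
    (hpos : 0 < pscal g u P y)
    (hOrth : (∑ μ, (lowerField g P y μ : ℂ) * f y μ) = 0) (μ : Fin 4) :
    epsF g u P f y μ = f y μ + ((P y μ * (pscal g u P y)⁻¹ : ℝ) : ℂ)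
      * ∑ lam, ((lowerField g u y lam : ℝ) : ℂ) * f y lam := by
  have ht : pscal g u P y ≠ 0 := hpos.ne'
  have htC : (pscal g u P y : ℂ) ≠ 0 := by exact_mod_cast ht
  have hO := hOrth
  simp only [lowerField, Fin.sum_univ_four] at hO
  push_cast at hO
  fin_cases μ <;>
  · simp only [epsF, SmixF, phatF, lowerField, Fin.sum_univ_four]
    norm_num
    push_cast
    field_simp
    linear_combination ((pscal g u P y : ℂ) * (u y _ : ℂ) - (P y _ : ℂ)) * hO

lemma SP_zero (g : Pt → Matrix (Fin 4) (Fin 4) ℝ) (u P : Pt → Fin 4 → ℝ) (y : Pt)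
    (hgSymm : ∀ x μ ν, g x μ ν = g x ν μ)
    (hNull : (∑ μ, ∑ ν, g y μ ν * P y μ * P y ν) = 0)
    (hpos : 0 < pscal g u P y) (μ : Fin 4) :
    ∑ ν, SmixF g u P y μ ν * P y ν = 0 := by
  have ht : pscal g u P y ≠ 0 := hpos.ne'
  have hN := hNull
  simp only [Fin.sum_univ_four] at hN
  have hT : pscal g u P y = -(∑ μ, ∑ ν, g y μ ν * u y μ * P y ν) := rfl
  simp only [Fin.sum_univ_four] at hT
  simp only [hgSymm y 1 0, hgSymm y 2 0, hgSymm y 2 1, hgSymm y 3 0, hgSymm y 3 1,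
    hgSymm y 3 2] at hN hT
  simp only [SmixF, add_mul, sub_mul, ite_mul, one_mul, zero_mul,
    Finset.sum_add_distrib, Finset.sum_sub_distrib, Finset.sum_ite_eq, Finset.mem_univ,
    if_true]
  simp only [phatF, lowerField, Fin.sum_univ_four]
  simp only [hgSymm y 1 0, hgSymm y 2 0, hgSymm y 2 1, hgSymm y 3 0, hgSymm y 3 1,
    hgSymm y 3 2]
  field_simp
  linear_combination (pscal g u P y * u y μ - P y μ) * hN + (pscal g u P y * P y μ) * hT
/-- If the polarization vector f^μ is parallel transported along the
null geodesic p and satisfies p_μ f^μ = 0, then the transverse polarization vector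
ε^μ := S^μ_ν f^ν satisfies p^α ∇_α ε^μ = (p^μ/p) ε_β p^α ∇_α u^β, and its
transverse directional derivative along p vanishes: S^μ_ν p^α ∇_α ε^ν = 0. -/
theorem transverse_polarization_transport
    (g : Pt → Matrix (Fin 4) (Fin 4) ℝ) (Γ : Pt → Fin 4 → Fin 4 → Fin 4 → ℝ)
    (u P : Pt → Fin 4 → ℝ) (f : Pt → Fin 4 → ℂ)
    (hgSymm : ∀ x μ ν, g x μ ν = g x ν μ)
    (hΓSymm : ∀ x μ ν lam, Γ x μ ν lam = Γ x μ lam ν)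
    (hCompat : ∀ x lam μ ν, pd (fun y => g y μ ν) lam x =
      (∑ α, Γ x α lam μ * g x α ν) + ∑ α, Γ x α lam ν * g x μ α)
    (hgD : ∀ μ ν, Differentiable ℝ fun y => g y μ ν)
    (huD : ∀ μ, Differentiable ℝ fun y => u y μ)
    (hPD : ∀ μ, Differentiable ℝ fun y => P y μ)
    (hfD : ∀ μ, Differentiable ℝ fun y => f y μ)
    (hNull : ∀ x, (∑ μ, ∑ ν, g x μ ν * P x μ * P x ν) = 0)
    (hUnit : ∀ x, (∑ μ, ∑ ν, g x μ ν * u x μ * u x ν) = -1)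
    (hPgeo : ∀ x μ, dirD Γ P P μ x = 0)
    (hugeo : ∀ x μ, dirD Γ u u μ x = 0)
    (hpos : ∀ x, 0 < pscal g u P x)
    (hOrth : ∀ x, (∑ μ, (lowerField g P x μ : ℂ) * f x μ) = 0)
    (hPar : ∀ x μ, dirDC Γ P f μ x = 0) :
    (∀ x μ,
      dirDC Γ P (epsF g u P f) μ x =
        ((P x μ / pscal g u P x : ℝ) : ℂ) *
          ∑ β, (∑ α, (g x β α : ℂ) * epsF g u P f x α) * ((dirD Γ P u β x : ℝ) : ℂ)) ∧
    (∀ x μ, (∑ ν, (SmixF g u P x μ ν : ℂ) * dirDC Γ P (epsF g u P f) ν x) = 0) := by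
  have hpDf : Differentiable ℝ (pscal g u P) := by
    apply Differentiable.neg
    apply Differentiable.fun_sum; intro μ _
    apply Differentiable.fun_sum; intro lam _
    exact ((hgD μ lam).mul (huD μ)).mul (hPD lam)
  have hq : Differentiable ℝ (fun y => (pscal g u P y)⁻¹) :=
    fun y => ((hpDf y).inv (hpos y).ne')
  have hlowuD : ∀ lam, Differentiable ℝ (fun y => lowerField g u y lam) := by
    intro lam
    apply Differentiable.fun_sum; intro α _
    exact (hgD lam α).mul (huD α)
  have hsD : Differentiable ℝ (fun y => ∑ lam, ((lowerField g u y lam : ℝ) : ℂ) * f y lam) := by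
    apply Differentiable.fun_sum; intro lam _
    exact (Complex.ofRealCLM.differentiable.comp (hlowuD lam)).mul (hfD lam)
  have h1 : ∀ x μ,
      dirDC Γ P (epsF g u P f) μ x =
        ((P x μ / pscal g u P x : ℝ) : ℂ) *
          ∑ β, (∑ α, (g x β α : ℂ) * epsF g u P f x α) * ((dirD Γ P u β x : ℝ) : ℂ) := by
    intro x μ
    have hfun : epsF g u P f = fun y ν => f y ν + ((P y ν * (pscal g u P y)⁻¹ : ℝ) : ℂ)
        * ∑ lam, ((lowerField g u y lam : ℝ) : ℂ) * f y lam :=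
      funext fun y => funext fun ν => eps_formula g u P f y (hpos y) (hOrth y) ν
    have hDs : ∑ ν, (P x ν : ℂ)
        * pdC (fun y => ∑ lam, ((lowerField g u y lam : ℝ) : ℂ) * f y lam) ν x
        = ∑ β, ((dirD Γ P u β x : ℝ) : ℂ) * (∑ lam, ((g x lam β : ℝ) : ℂ) * f x lam) := by
      rw [contract_derivC g Γ P u f hCompat hgD huD hfD x]
      simp [hPar x]
    have hDpp := Dp_pscal g Γ u P hCompat hgD huD hPD hPgeo x
    have hDq : ∑ ν, P x ν * pd (fun y => (pscal g u P y)⁻¹) ν x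
        = (∑ β, (∑ α, g x β α * P x α) * dirD Γ P u β x) / (pscal g u P x)^2 := by
      simp only [pd_inv_pscal g u P hgD huD hPD hpos, div_eq_mul_inv, mul_neg, neg_mul,
        ← mul_assoc]
      rw [Finset.sum_neg_distrib, ← Finset.sum_mul, hDpp]; ring
    rw [hfun, dirDC_split Γ P (fun y => (pscal g u P y)⁻¹) _ f hPD hq hfD hsD μ x,
      hPar x μ, dirD_Pq Γ P (fun y => (pscal g u P y)⁻¹) hPD hq μ x, hPgeo x μ, hDs, hDq]
    simp only [lowerField, Fin.sum_univ_four]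
    push_cast
    simp only [hgSymm x 1 0, hgSymm x 2 0, hgSymm x 2 1, hgSymm x 3 0, hgSymm x 3 1,
      hgSymm x 3 2]
    have htC : (pscal g u P x : ℂ) ≠ 0 := by exact_mod_cast (hpos x).ne'
    field_simp
    ring
  refine ⟨h1, ?_⟩
  intro x μ
  simp only [h1]
  set K := ∑ β, (∑ α, (g x β α : ℂ) * epsF g u P f x α) * ((dirD Γ P u β x : ℝ) : ℂ) with hK
  have hSP := SP_zero g u P x hgSymm (hNull x) (hpos x) μ
  simp only [Fin.sum_univ_four] at hSP
  have hSPC := congrArg (Complex.ofReal) hSP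
  push_cast at hSPC
  have htC : (pscal g u P x : ℂ) ≠ 0 := by exact_mod_cast (hpos x).ne'
  simp only [Fin.sum_univ_four]
  push_cast
  field_simp
  linear_combination K * hSPC
end

section
/- The curvature twist depends only on the Weyl (trace-free) part of the Riemann tensor: u^γ p̂^β ε^{ρσ} R_{γρβσ} = u^γ p̂^β ε^{ρσ} C_{γρβσ}, where R_{ρσμν} = C_{ρσμν} + (g_{ρ[μ} R_{ν]σ} − g_{σ[μ} R_{ν]ρ}) − (1/3) g_{ρ[μ} g_{ν]σ} R; i.e., the Ricci and scalar-curvature terms contribute zero when contracted with u^γ p̂^β ε^{ρσ}. -/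
/-- The Minkowski metric of signature (−,+,+,+) on ℝ⁴ (orthonormal coordinates). -/
noncomputable def eta : Matrix (Fin 4) (Fin 4) ℝ := Matrix.diagonal ![-1, 1, 1, 1]

/-- Index lowering with the metric. -/
noncomputable def lowerIdx (v : Fin 4 → ℝ) : Fin 4 → ℝ := eta.mulVec v

/-- Inner product g(u,v). -/
noncomputable def mdot (u v : Fin 4 → ℝ) : ℝ := ∑ μ, lowerIdx u μ * v μ

/-- The Levi-Civita tensor ε_{αβμν} in orthonormal coordinates (ε_{0123} = 1). -/
noncomputable def lev (a b c d : Fin 4) : ℝ :=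
  ∑ σ : Equiv.Perm (Fin 4),
    if σ 0 = a ∧ σ 1 = b ∧ σ 2 = c ∧ σ 3 = d then ((Equiv.Perm.sign σ : ℤ) : ℝ) else 0

/-- The screen rotator ε_{μν} := u^α p̂^β ε_{αβμν}. -/
noncomputable def screenRot (u phat : Fin 4 → ℝ) (μ ν : Fin 4) : ℝ :=
  ∑ α, ∑ β, u α * phat β * lev α β μ ν

/-- The raised screen rotator ε^{ρσ}. -/
noncomputable def screenRotUp (u phat : Fin 4 → ℝ) (ρ σ : Fin 4) : ℝ :=
  ∑ μ, ∑ ν, (eta⁻¹) ρ μ * (eta⁻¹) σ ν * screenRot u phat μ ν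

/-- Integer-valued version of the Levi-Civita sum (for `decide`). -/
def levZ (a b c d : Fin 4) : ℤ :=
  ∑ σ : Equiv.Perm (Fin 4),
    if σ 0 = a ∧ σ 1 = b ∧ σ 2 = c ∧ σ 3 = d then ((Equiv.Perm.sign σ : ℤ)) else 0

def levT : Fin 4 → Fin 4 → Fin 4 → Fin 4 → ℤ :=
  ![
    ![![![0, 0, 0, 0], ![0, 0, 0, 0], ![0, 0, 0, 0], ![0, 0, 0, 0]],
      ![![0, 0, 0, 0], ![0, 0, 0, 0], ![0, 0, 0, 1], ![0, 0, -1, 0]],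
      ![![0, 0, 0, 0], ![0, 0, 0, -1], ![0, 0, 0, 0], ![0, 1, 0, 0]],
      ![![0, 0, 0, 0], ![0, 0, 1, 0], ![0, -1, 0, 0], ![0, 0, 0, 0]]],
    ![![![0, 0, 0, 0], ![0, 0, 0, 0], ![0, 0, 0, -1], ![0, 0, 1, 0]],
      ![![0, 0, 0, 0], ![0, 0, 0, 0], ![0, 0, 0, 0], ![0, 0, 0, 0]],
      ![![0, 0, 0, 1], ![0, 0, 0, 0], ![0, 0, 0, 0], ![-1, 0, 0, 0]],
      ![![0, 0, -1, 0], ![0, 0, 0, 0], ![1, 0, 0, 0], ![0, 0, 0, 0]]],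
    ![![![0, 0, 0, 0], ![0, 0, 0, 1], ![0, 0, 0, 0], ![0, -1, 0, 0]],
      ![![0, 0, 0, -1], ![0, 0, 0, 0], ![0, 0, 0, 0], ![1, 0, 0, 0]],
      ![![0, 0, 0, 0], ![0, 0, 0, 0], ![0, 0, 0, 0], ![0, 0, 0, 0]],
      ![![0, 1, 0, 0], ![-1, 0, 0, 0], ![0, 0, 0, 0], ![0, 0, 0, 0]]],
    ![![![0, 0, 0, 0], ![0, 0, -1, 0], ![0, 1, 0, 0], ![0, 0, 0, 0]],
      ![![0, 0, 1, 0], ![0, 0, 0, 0], ![-1, 0, 0, 0], ![0, 0, 0, 0]],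
      ![![0, -1, 0, 0], ![1, 0, 0, 0], ![0, 0, 0, 0], ![0, 0, 0, 0]],
      ![![0, 0, 0, 0], ![0, 0, 0, 0], ![0, 0, 0, 0], ![0, 0, 0, 0]]]]

lemma lev_cast (a b c d : Fin 4) : lev a b c d = ((levZ a b c d : ℤ) : ℝ) := by
  unfold lev levZ; push_cast; rfl

lemma levZ_eq : ∀ a b c d, levZ a b c d = levT a b c d := by decide

lemma lev_eval (a b c d : Fin 4) : lev a b c d = ((levT a b c d : ℤ) : ℝ) := by
  rw [lev_cast, levZ_eq]

lemma eta_inv : eta⁻¹ = eta := by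
  apply Matrix.inv_eq_right_inv
  ext i j
  fin_cases i <;> fin_cases j <;>
    simp [eta, Matrix.mul_apply, Fin.sum_univ_four, Matrix.diagonal, Matrix.one_apply]

/-- Explicit component table for the raised screen rotator. -/
noncomputable def Sval (u phat : Fin 4 → ℝ) : Matrix (Fin 4) (Fin 4) ℝ :=
  ![![0, -(u 2 * phat 3) + u 3 * phat 2, u 1 * phat 3 - u 3 * phat 1, -(u 1 * phat 2) + u 2 * phat 1],
    ![u 2 * phat 3 - u 3 * phat 2, 0, u 0 * phat 3 - u 3 * phat 0, -(u 0 * phat 2) + u 2 * phat 0],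
    ![-(u 1 * phat 3) + u 3 * phat 1, -(u 0 * phat 3) + u 3 * phat 0, 0, u 0 * phat 1 - u 1 * phat 0],
    ![u 1 * phat 2 - u 2 * phat 1, u 0 * phat 2 - u 2 * phat 0, -(u 0 * phat 1) + u 1 * phat 0, 0]]

set_option maxHeartbeats 2000000 in
lemma sru_eval (u phat : Fin 4 → ℝ) (ρ σ : Fin 4) :
    screenRotUp u phat ρ σ = Sval u phat ρ σ := by
  unfold screenRotUp screenRot
  rw [eta_inv]
  fin_cases ρ <;> fin_cases σ <;>
    (simp only [Fin.sum_univ_four, lev_eval]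
     norm_num [eta, levT, Sval, Matrix.diagonal_apply, Matrix.vecHead, Matrix.vecTail]
     try simp (config := { decide := true })
     try ring)
lemma eta_00 : eta 0 0 = -1 := by norm_num [eta, Matrix.diagonal_apply, Matrix.vecHead, Matrix.vecTail] <;> decide
lemma eta_01 : eta 0 1 = 0 := by norm_num [eta, Matrix.diagonal_apply, Matrix.vecHead, Matrix.vecTail] <;> decide
lemma eta_02 : eta 0 2 = 0 := by norm_num [eta, Matrix.diagonal_apply, Matrix.vecHead, Matrix.vecTail] <;> decide
lemma eta_03 : eta 0 3 = 0 := by norm_num [eta, Matrix.diagonal_apply, Matrix.vecHead, Matrix.vecTail] <;> decide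
lemma eta_10 : eta 1 0 = 0 := by norm_num [eta, Matrix.diagonal_apply, Matrix.vecHead, Matrix.vecTail] <;> decide
lemma eta_11 : eta 1 1 = 1 := by norm_num [eta, Matrix.diagonal_apply, Matrix.vecHead, Matrix.vecTail] <;> decide
lemma eta_12 : eta 1 2 = 0 := by norm_num [eta, Matrix.diagonal_apply, Matrix.vecHead, Matrix.vecTail] <;> decide
lemma eta_13 : eta 1 3 = 0 := by norm_num [eta, Matrix.diagonal_apply, Matrix.vecHead, Matrix.vecTail] <;> decide
lemma eta_20 : eta 2 0 = 0 := by norm_num [eta, Matrix.diagonal_apply, Matrix.vecHead, Matrix.vecTail] <;> decide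
lemma eta_21 : eta 2 1 = 0 := by norm_num [eta, Matrix.diagonal_apply, Matrix.vecHead, Matrix.vecTail] <;> decide
lemma eta_22 : eta 2 2 = 1 := by norm_num [eta, Matrix.diagonal_apply, Matrix.vecHead, Matrix.vecTail] <;> rfl
lemma eta_23 : eta 2 3 = 0 := by norm_num [eta, Matrix.diagonal_apply, Matrix.vecHead, Matrix.vecTail] <;> decide
lemma eta_30 : eta 3 0 = 0 := by norm_num [eta, Matrix.diagonal_apply, Matrix.vecHead, Matrix.vecTail] <;> decide
lemma eta_31 : eta 3 1 = 0 := by norm_num [eta, Matrix.diagonal_apply, Matrix.vecHead, Matrix.vecTail] <;> decide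
lemma eta_32 : eta 3 2 = 0 := by norm_num [eta, Matrix.diagonal_apply, Matrix.vecHead, Matrix.vecTail] <;> decide
lemma eta_33 : eta 3 3 = 1 := by norm_num [eta, Matrix.diagonal_apply, Matrix.vecHead, Matrix.vecTail] <;> rfl
lemma sru_00 (u phat : Fin 4 → ℝ) : screenRotUp u phat 0 0 = 0 := by rw [sru_eval]; norm_num [Sval]; try ring
lemma sru_01 (u phat : Fin 4 → ℝ) : screenRotUp u phat 0 1 = -(u 2 * phat 3) + (u 3 * phat 2) := by rw [sru_eval]; norm_num [Sval]; try ring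
lemma sru_02 (u phat : Fin 4 → ℝ) : screenRotUp u phat 0 2 = (u 1 * phat 3) - (u 3 * phat 1) := by rw [sru_eval]; rfl
lemma sru_03 (u phat : Fin 4 → ℝ) : screenRotUp u phat 0 3 = -(u 1 * phat 2) + (u 2 * phat 1) := by rw [sru_eval]; rfl
lemma sru_10 (u phat : Fin 4 → ℝ) : screenRotUp u phat 1 0 = (u 2 * phat 3) - (u 3 * phat 2) := by rw [sru_eval]; norm_num [Sval]; try ring
lemma sru_11 (u phat : Fin 4 → ℝ) : screenRotUp u phat 1 1 = 0 := by rw [sru_eval]; norm_num [Sval]; try ring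
lemma sru_12 (u phat : Fin 4 → ℝ) : screenRotUp u phat 1 2 = (u 0 * phat 3) - (u 3 * phat 0) := by rw [sru_eval]; rfl
lemma sru_13 (u phat : Fin 4 → ℝ) : screenRotUp u phat 1 3 = -(u 0 * phat 2) + (u 2 * phat 0) := by rw [sru_eval]; rfl
lemma sru_20 (u phat : Fin 4 → ℝ) : screenRotUp u phat 2 0 = -(u 1 * phat 3) + (u 3 * phat 1) := by rw [sru_eval]; rfl
lemma sru_21 (u phat : Fin 4 → ℝ) : screenRotUp u phat 2 1 = -(u 0 * phat 3) + (u 3 * phat 0) := by rw [sru_eval]; rfl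
lemma sru_22 (u phat : Fin 4 → ℝ) : screenRotUp u phat 2 2 = 0 := by rw [sru_eval]; rfl
lemma sru_23 (u phat : Fin 4 → ℝ) : screenRotUp u phat 2 3 = (u 0 * phat 1) - (u 1 * phat 0) := by rw [sru_eval]; rfl
lemma sru_30 (u phat : Fin 4 → ℝ) : screenRotUp u phat 3 0 = (u 1 * phat 2) - (u 2 * phat 1) := by rw [sru_eval]; rfl
lemma sru_31 (u phat : Fin 4 → ℝ) : screenRotUp u phat 3 1 = (u 0 * phat 2) - (u 2 * phat 0) := by rw [sru_eval]; rfl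
lemma sru_32 (u phat : Fin 4 → ℝ) : screenRotUp u phat 3 2 = -(u 0 * phat 1) + (u 1 * phat 0) := by rw [sru_eval]; rfl
lemma sru_33 (u phat : Fin 4 → ℝ) : screenRotUp u phat 3 3 = 0 := by rw [sru_eval]; rfl

set_option maxHeartbeats 4000000 in
/-- The curvature twist depends only on the Weyl part of the
Riemann tensor: u^γ p̂^β ε^{ρσ} R_{γρβσ} = u^γ p̂^β ε^{ρσ} C_{γρβσ}, where
R_{ρσμν} = C_{ρσμν} + (g_{ρ[μ}Ric_{ν]σ} − g_{σ[μ}Ric_{ν]ρ}) − (1/3) g_{ρ[μ}g_{ν]σ} Rs;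
the Ricci and scalar-curvature terms contribute zero to the contraction. -/
theorem curvature_twist_weyl
    (u phat : Fin 4 → ℝ)
    (hu : mdot u u = -1) (hp : mdot phat phat = 1) (hup : mdot u phat = 0)
    (R C : Fin 4 → Fin 4 → Fin 4 → Fin 4 → ℝ)
    (Ric : Fin 4 → Fin 4 → ℝ) (Rs : ℝ)
    (hRicSymm : ∀ μ ν, Ric μ ν = Ric ν μ)
    (hDecomp : ∀ ρ σ μ ν,
      R ρ σ μ ν = C ρ σ μ ν
        + ((1 / 2) * (eta ρ μ * Ric ν σ - eta ρ ν * Ric μ σ)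
            - (1 / 2) * (eta σ μ * Ric ν ρ - eta σ ν * Ric μ ρ))
        - (1 / 3) * ((1 / 2) * (eta ρ μ * eta ν σ - eta ρ ν * eta μ σ)) * Rs) :
    (∑ γ, ∑ β, ∑ ρ, ∑ σ, u γ * phat β * screenRotUp u phat ρ σ * R γ ρ β σ) =
      ∑ γ, ∑ β, ∑ ρ, ∑ σ, u γ * phat β * screenRotUp u phat ρ σ * C γ ρ β σ := by
  simp only [hDecomp, Fin.sum_univ_four]
  simp only [eta_00, eta_01, eta_02, eta_03, eta_10, eta_11, eta_12, eta_13,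
    eta_20, eta_21, eta_22, eta_23, eta_30, eta_31, eta_32, eta_33,
    sru_00, sru_01, sru_02, sru_03, sru_10, sru_11, sru_12, sru_13,
    sru_20, sru_21, sru_22, sru_23, sru_30, sru_31, sru_32, sru_33,
    mul_zero, zero_mul, mul_one, one_mul, add_zero, zero_add, sub_zero, zero_sub,
    mul_neg, neg_mul, neg_zero, neg_neg]
  simp only [hRicSymm 1 0, hRicSymm 2 0, hRicSymm 2 1, hRicSymm 3 0, hRicSymm 3 1, hRicSymm 3 2]
  ring
end
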